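/- Let G be a finite 2-group with center C such that G/C = ⟨aC⟩ × ⟨bC⟩ is a direct product of two groups of order two and the commutator subgroup G' = ⟨e⟩ has order two. Let x = x₀ + x₁a + x₂b + x₃ab with x₀, x₁, x₂, x₃ ∈ ℤ₂C. Then xx⊙ = 1 holds if and only if the following four equations hold in ℤ₂C: x₀² + x₁²a²e + x₂²b²e + x₃²a²b² = 1, (x₀x₁ + x₂x₃b²)(1 + e) = 0, (x₀x₂ + x₁x₃a²)(1 + e) = 0, and (x₀x₃ + x₁x₂)(1 + e) = 0. -/

import Mathlib

/-- The group algebra of `G` over the field `ℤ₂` with two elements. -/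
abbrev R2 (G : Type*) [Group G] := MonoidAlgebra (ZMod 2) G

/-- The image of a group element in the group algebra. -/
noncomputable def emb {G : Type*} [Group G] (g : G) : R2 G := MonoidAlgebra.single g 1

/-- The augmentation map: the sum of the coefficients. -/
def aug {G : Type*} [Group G] (x : R2 G) : ZMod 2 := Finsupp.sum x.coeff fun _ c => c

/-- The canonical embedding of `G` into the unit group of its group algebra. -/
noncomputable def iota (G : Type*) [Group G] : G →* (R2 G)ˣ :=
  (Units.map (MonoidAlgebra.of (ZMod 2) G)).comp toUnits.toMonoidHom

open Classical in
/-- The map `g ↦ g` for `g ∈ C = Z(G)` and `g ↦ ge` for `g ∉ C`. -/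
noncomputable def sigmaMap (G : Type*) [Group G] (e : G) : G → G :=
  fun g => if g ∈ Subgroup.center G then g else g * e

/-- The involution `⊙` of `ℤ₂G`: the linear extension of `g ↦ g` for `g ∈ C = Z(G)`
and `g ↦ ge` for `g ∉ C`. -/
noncomputable def odot {G : Type*} [Group G] (e : G) (x : R2 G) : R2 G :=
  MonoidAlgebra.ofCoeff (Finsupp.mapDomain (sigmaMap G e) x.coeff)

/-- The set of unitary normalized units: `V_⊙(ℤ₂G) = {u ∈ V(ℤ₂G) : u⊙ = u⁻¹}`. -/
noncomputable def VodotSet (G : Type*) [Group G] (e : G) : Set (R2 G)ˣ :=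
  {u | aug (u : R2 G) = 1 ∧ odot e (u : R2 G) = ((u⁻¹ : (R2 G)ˣ) : R2 G)}

/-- Membership in the ideal `(1 + e)ℤ₂C` of `ℤ₂C`, where `C = Z(G)`. -/
noncomputable def InIdC {G : Type*} [Group G] (e : G) (x : R2 G) : Prop :=
  ∃ u : R2 G, ↑u.coeff.support ⊆ (Subgroup.center G : Set G) ∧ x = (1 + emb e) * u

/-- The set `W = {1 + y₁a + y₂b + y₃ab : yᵢ ∈ (1 + e)ℤ₂C}` inside the unit group. -/
noncomputable def WsetB {G : Type*} [Group G] (e a b : G) : Set (R2 G)ˣ :=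
  {w | ∃ y₁ y₂ y₃ : R2 G, InIdC e y₁ ∧ InIdC e y₂ ∧ InIdC e y₃ ∧
    (w : R2 G) = 1 + y₁ * emb a + y₂ * emb b + y₃ * (emb a * emb b)}

/-- The set `V(ℤ₂C)[2]` of normalized units of `ℤ₂C` of order dividing 2, where `C = Z(G)`. -/
noncomputable def V2Set (G : Type*) [Group G] : Set (R2 G)ˣ :=
  {u | ↑(u : R2 G).coeff.support ⊆ (Subgroup.center G : Set G) ∧ aug (u : R2 G) = 1 ∧ u * u = 1}


section Aux
variable {G : Type*} [Group G]
open scoped commutatorElement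


lemma emb_mul (g h : G) : emb g * emb h = emb (g * h) := by
  simp [emb, MonoidAlgebra.single_mul_single]

lemma emb_one : emb (1 : G) = 1 := rfl

lemma mul_emb_eq_mapDomain (x : R2 G) (g : G) :
    x * emb g = MonoidAlgebra.ofCoeff (Finsupp.mapDomain (· * g) x.coeff) := by
  ext h
  have : Finsupp.mapDomain (· * g) x.coeff = Finsupp.mapDomain (⇑(Equiv.mulRight g)) x.coeff := rfl
  rw [MonoidAlgebra.coeff_ofCoeff, this, Finsupp.mapDomain_equiv_apply]
  rw [emb, MonoidAlgebra.coeff_mul_single_apply]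
  simp [Equiv.mulRight]

/-- commuting with everything when support is central -/
lemma central_comm {x : R2 G} (hx : ↑x.coeff.support ⊆ (Subgroup.center G : Set G)) (y : R2 G) :
    x * y = y * x := by
  induction y using MonoidAlgebra.induction_linear with
  | zero => simp
  | add p q hp hq => rw [mul_add, add_mul, hp, hq]
  | single g r =>
    ext h
    rw [MonoidAlgebra.coeff_mul_single_apply, MonoidAlgebra.coeff_single_mul_apply]
    have key : x.coeff (h * g⁻¹) = x.coeff (g⁻¹ * h) := by
      by_cases h1 : h * g⁻¹ ∈ Subgroup.center G
      · have hcomm := Subgroup.mem_center_iff.mp h1 g⁻¹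
        have heq : g⁻¹ * h = h * g⁻¹ := by
          calc g⁻¹ * h = (g⁻¹ * (h * g⁻¹)) * g := by group
          _ = ((h * g⁻¹) * g⁻¹) * g := by rw [hcomm]
          _ = h * g⁻¹ := by group
        rw [heq]
      · by_cases h2 : g⁻¹ * h ∈ Subgroup.center G
        · congr 1
          have := (Subgroup.mem_center_iff.mp h2 g)
          -- g * (g⁻¹ * h) = (g⁻¹ * h) * g  →  h = g⁻¹ h g → h g⁻¹ = g⁻¹ h
          have : h * g⁻¹ = g⁻¹ * h := by
            have h3 : g * (g⁻¹ * h) = (g⁻¹ * h) * g := this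
            calc h * g⁻¹ = (g * (g⁻¹ * h)) * g⁻¹ := by group
            _ = ((g⁻¹ * h) * g) * g⁻¹ := by rw [h3]
            _ = g⁻¹ * h := by group
          exact this
        · have z1 : x.coeff (h * g⁻¹) = 0 := by
            by_contra hc
            exact h1 (hx (Finsupp.mem_support_iff.mpr hc))
          have z2 : x.coeff (g⁻¹ * h) = 0 := by
            by_contra hc
            exact h2 (hx (Finsupp.mem_support_iff.mpr hc))
          rw [z1, z2]
    rw [key, mul_comm]

lemma odot_central {e : G} {x : R2 G} (hx : ↑x.coeff.support ⊆ (Subgroup.center G : Set G)) :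
    odot e x = x := by
  unfold odot
  rw [Finsupp.mapDomain_congr (g := id), Finsupp.mapDomain_id]
  intro c hc
  have : c ∈ Subgroup.center G := hx (Finset.mem_coe.mpr hc)
  simp [sigmaMap, this]

lemma odot_mul_emb {e : G} {x : R2 G} (hx : ↑x.coeff.support ⊆ (Subgroup.center G : Set G))
    {g : G} (hg : g ∉ Subgroup.center G) :
    odot e (x * emb g) = x * emb g * emb e := by
  rw [mul_assoc, emb_mul, mul_emb_eq_mapDomain x (g * e), mul_emb_eq_mapDomain x g]
  unfold odot
  rw [MonoidAlgebra.coeff_ofCoeff, ← Finsupp.mapDomain_comp, Finsupp.mapDomain_congr]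
  intro c hc
  have hc' := Finset.mem_coe.mpr hc
  have hcC : c ∈ Subgroup.center G := hx hc' 
  have : c * g ∉ Subgroup.center G := by
    intro hmem
    exact hg (by simpa using mul_mem (inv_mem hcC) hmem)
  simp [sigmaMap, this, Function.comp, mul_assoc]

lemma odot_add (e : G) (x y : R2 G) : odot e (x + y) = odot e x + odot e y :=
  MonoidAlgebra.mapDomain_add _ x y

/-- evaluation vanishes off the coset -/
lemma eval_ne {x : R2 G} (hx : ↑x.coeff.support ⊆ (Subgroup.center G : Set G)) {g h : G}
    (hne : (h : G ⧸ Subgroup.center G) ≠ (g : G ⧸ Subgroup.center G)) :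
    (x * emb g).coeff h = 0 := by
  rw [emb, MonoidAlgebra.coeff_mul_single_apply]
  have : x.coeff (h * g⁻¹) = 0 := by
    by_contra hc
    have hC : h * g⁻¹ ∈ Subgroup.center G := hx (Finsupp.mem_support_iff.mpr hc)
    apply hne
    rw [QuotientGroup.eq]
    have hC2 : g * h⁻¹ ∈ Subgroup.center G := by
      have := inv_mem hC
      rwa [mul_inv_rev, inv_inv] at this
    have hcomm := Subgroup.mem_center_iff.mp hC2 h⁻¹
    have heq : h⁻¹ * g = g * h⁻¹ := by
      calc h⁻¹ * g = (h⁻¹ * (g * h⁻¹)) * h := by group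
      _ = ((g * h⁻¹) * h⁻¹) * h := by rw [hcomm]
      _ = g * h⁻¹ := by group
    rw [heq]
    exact hC2
  rw [this, zero_mul]


/-- Every element of the quotient is a^i * b^j. -/
lemma key_decomp (a b : G)
    (hab : ((a : G ⧸ Subgroup.center G)) * b = (b : G ⧸ Subgroup.center G) * a)
    (hsup : Subgroup.zpowers ((a : G ⧸ Subgroup.center G)) ⊔
      Subgroup.zpowers ((b : G ⧸ Subgroup.center G)) = ⊤) :
    ∀ q : G ⧸ Subgroup.center G, ∃ i j : ℤ,
      q = ((a : G ⧸ Subgroup.center G)) ^ i * ((b : G ⧸ Subgroup.center G)) ^ j := by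
  set A := ((a : G ⧸ Subgroup.center G)) with hA
  set B := ((b : G ⧸ Subgroup.center G)) with hB
  have hc : Commute A B := hab
  have hcl : Subgroup.closure {A, B} = ⊤ := by
    rw [Set.insert_eq, Subgroup.closure_union, ← Subgroup.zpowers_eq_closure,
      ← Subgroup.zpowers_eq_closure, hsup]
  intro q
  have hq : q ∈ Subgroup.closure {A, B} := hcl ▸ Subgroup.mem_top q
  induction hq using Subgroup.closure_induction with
  | mem x hx =>
    rcases hx with h | h
    · exact ⟨1, 0, by simp [h]⟩
    · rw [Set.mem_singleton_iff] at h
      exact ⟨0, 1, by simp [h]⟩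
  | one => exact ⟨0, 0, by simp⟩
  | mul x y hx hy ihx ihy =>
    obtain ⟨i, j, hij⟩ := ihx
    obtain ⟨k, l, hkl⟩ := ihy
    refine ⟨i + k, j + l, ?_⟩
    have hcomm : B ^ j * A ^ k = A ^ k * B ^ j := (hc.symm.zpow_zpow j k).eq
    rw [hij, hkl, zpow_add, zpow_add]
    calc A ^ i * B ^ j * (A ^ k * B ^ l) = A ^ i * (B ^ j * A ^ k) * B ^ l := by group
    _ = A ^ i * (A ^ k * B ^ j) * B ^ l := by rw [hcomm]
    _ = A ^ i * A ^ k * (B ^ j * B ^ l) := by group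
  | inv x hx ihx =>
    obtain ⟨i, j, hij⟩ := ihx
    refine ⟨-i, -j, ?_⟩
    have hcomm : A ^ (-i) * B ^ (-j) = B ^ (-j) * A ^ (-i) := (hc.zpow_zpow (-i) (-j)).eq
    rw [hij, mul_inv_rev, ← zpow_neg, ← zpow_neg, hcomm]

lemma g_decomp (a b : G)
    (hab : ((a : G ⧸ Subgroup.center G)) * b = (b : G ⧸ Subgroup.center G) * a)
    (hsup : Subgroup.zpowers ((a : G ⧸ Subgroup.center G)) ⊔
      Subgroup.zpowers ((b : G ⧸ Subgroup.center G)) = ⊤) :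
    ∀ g : G, ∃ (i j : ℤ) (z : G), z ∈ Subgroup.center G ∧ g = a ^ i * b ^ j * z := by
  intro g
  obtain ⟨i, j, hij⟩ := key_decomp a b hab hsup (g : G ⧸ Subgroup.center G)
  have hmk : ((a ^ i * b ^ j : G) : G ⧸ Subgroup.center G) = (g : G ⧸ Subgroup.center G) := by
    rw [QuotientGroup.mk_mul, QuotientGroup.mk_zpow, QuotientGroup.mk_zpow, ← hij]
  have hz : (a ^ i * b ^ j)⁻¹ * g ∈ Subgroup.center G := QuotientGroup.eq.mp hmk
  exact ⟨i, j, (a ^ i * b ^ j)⁻¹ * g, hz, by group⟩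

lemma comm_le_center (a b : G)
    (hab : ((a : G ⧸ Subgroup.center G)) * b = (b : G ⧸ Subgroup.center G) * a)
    (hsup : Subgroup.zpowers ((a : G ⧸ Subgroup.center G)) ⊔
      Subgroup.zpowers ((b : G ⧸ Subgroup.center G)) = ⊤) :
    commutator G ≤ Subgroup.center G := by
  have hQcomm : ∀ p q : G ⧸ Subgroup.center G, p * q = q * p := by
    intro p q
    obtain ⟨i, j, hij⟩ := key_decomp a b hab hsup p
    obtain ⟨k, l, hkl⟩ := key_decomp a b hab hsup q
    have hc : Commute ((a : G ⧸ Subgroup.center G)) ((b : G ⧸ Subgroup.center G)) := hab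
    rw [hij, hkl]
    have c1 : Commute (((a : G ⧸ Subgroup.center G)) ^ i * ((b : G ⧸ Subgroup.center G)) ^ j)
        (((a : G ⧸ Subgroup.center G)) ^ k) :=
      Commute.mul_left ((Commute.refl _).zpow_zpow i k) (hc.symm.zpow_zpow j k)
    have c2 : Commute (((a : G ⧸ Subgroup.center G)) ^ i * ((b : G ⧸ Subgroup.center G)) ^ j)
        (((b : G ⧸ Subgroup.center G)) ^ l) :=
      Commute.mul_left (hc.zpow_zpow i l) ((Commute.refl _).zpow_zpow j l)
    exact (c1.mul_right c2).eq
  rw [commutator_def, Subgroup.commutator_le]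
  intro g _ h _
  rw [← QuotientGroup.eq_one_iff]
  have : ((⁅g, h⁆ : G) : G ⧸ Subgroup.center G) =
      ⁅(g : G ⧸ Subgroup.center G), (h : G ⧸ Subgroup.center G)⁆ := by
    simp [commutatorElement_def]
  rw [this, commutatorElement_eq_one_iff_commute]
  exact hQcomm _ _

lemma ab_rel (e : G) (hcomm : commutator G = Subgroup.zpowers e) (he : orderOf e = 2)
    (a b : G)
    (hab : ((a : G ⧸ Subgroup.center G)) * b = (b : G ⧸ Subgroup.center G) * a)
    (hsup : Subgroup.zpowers ((a : G ⧸ Subgroup.center G)) ⊔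
      Subgroup.zpowers ((b : G ⧸ Subgroup.center G)) = ⊤) :
    a * b = b * a * e := by
  have hmem : ⁅a, b⁆ ∈ Subgroup.zpowers e := by
    rw [← hcomm, commutator_def]
    exact Subgroup.commutator_mem_commutator (Subgroup.mem_top a) (Subgroup.mem_top b)
  obtain ⟨n, hn⟩ := Subgroup.mem_zpowers_iff.mp hmem
  have hmod : e ^ (n % 2) = e ^ n := by
    have := zpow_mod_orderOf e n
    rwa [he] at this
  have habe : ⁅a, b⁆ = e := by
    rcases Int.emod_two_eq n with h2 | h2
    · exfalso
      -- then a and b commute, so G is abelian, so e = 1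
      have hab1 : ⁅a, b⁆ = 1 := by rw [← hn, ← hmod, h2, zpow_zero]
      have hcab : Commute a b := commutatorElement_eq_one_iff_commute.mp hab1
      have hall : ∀ g h : G, Commute g h := by
        intro g h
        obtain ⟨i, j, z, hz, hgz⟩ := g_decomp a b hab hsup g
        obtain ⟨k, l, w, hw, hhw⟩ := g_decomp a b hab hsup h
        have cz : ∀ y : G, Commute y z := fun y => Subgroup.mem_center_iff.mp hz y
        have cw : ∀ y : G, Commute y w := fun y => Subgroup.mem_center_iff.mp hw y
        rw [hgz, hhw]
        have c1 : Commute (a ^ i * b ^ j * z) (a ^ k) :=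
          Commute.mul_left (Commute.mul_left ((Commute.refl a).zpow_zpow i k)
            (hcab.symm.zpow_zpow j k)) (cz _).symm
        have c2 : Commute (a ^ i * b ^ j * z) (b ^ l) :=
          Commute.mul_left (Commute.mul_left (hcab.zpow_zpow i l)
            ((Commute.refl b).zpow_zpow j l)) (cz _).symm
        have c3 : Commute (a ^ i * b ^ j * z) w := (cw _)
        exact (c1.mul_right c2).mul_right c3
      have hbot : commutator G ≤ ⊥ := by
        rw [commutator_def, Subgroup.commutator_le]
        intro g _ h _
        rw [Subgroup.mem_bot, commutatorElement_eq_one_iff_commute]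
        exact hall g h
      have he1 : e = 1 := by
        have : e ∈ commutator G := hcomm ▸ Subgroup.mem_zpowers e
        simpa using hbot this
      rw [he1, orderOf_one] at he
      omega
    · rw [← hn, ← hmod, h2, zpow_one]
  have : a * b * a⁻¹ * b⁻¹ = e := by rw [← commutatorElement_def]; exact habe
  calc a * b = (a * b * a⁻¹ * b⁻¹) * (b * a) := by group
  _ = e * (b * a) := by rw [this]
  _ = b * a * e := by
    have hE : e ∈ Subgroup.center G := comm_le_center a b hab hsup
      (hcomm ▸ Subgroup.mem_zpowers e)
    exact (Subgroup.mem_center_iff.mp hE (b * a)).symm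
lemma zero_of_mul_emb {x : R2 G} {g : G} (h : x * emb g = 0) : x = 0 := by
  have h2 : x * emb g * emb g⁻¹ = 0 := by rw [h, zero_mul]
  rwa [mul_assoc, emb_mul, mul_inv_cancel, show emb (1:G) = 1 from rfl, mul_one] at h2

lemma extract1 {u₀ u₁ u₂ u₃ : R2 G}
    (h₀ : ↑u₀.coeff.support ⊆ (Subgroup.center G : Set G))
    (h₁ : ↑u₁.coeff.support ⊆ (Subgroup.center G : Set G))
    (h₂ : ↑u₂.coeff.support ⊆ (Subgroup.center G : Set G))
    (h₃ : ↑u₃.coeff.support ⊆ (Subgroup.center G : Set G))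
    {g₀ g₁ g₂ g₃ : G}
    (d01 : ((g₀ : G ⧸ Subgroup.center G)) ≠ g₁)
    (d02 : ((g₀ : G ⧸ Subgroup.center G)) ≠ g₂)
    (d03 : ((g₀ : G ⧸ Subgroup.center G)) ≠ g₃)
    (hsum : u₀ * emb g₀ + u₁ * emb g₁ + u₂ * emb g₂ + u₃ * emb g₃ = 0) :
    u₀ = 0 := by
  apply zero_of_mul_emb (g := g₀)
  ext h
  rw [MonoidAlgebra.coeff_zero, Finsupp.coe_zero, Pi.zero_apply]
  by_cases hq : (h : G ⧸ Subgroup.center G) = (g₀ : G ⧸ Subgroup.center G)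
  · have happ : (u₀ * emb g₀ + u₁ * emb g₁ + u₂ * emb g₂ + u₃ * emb g₃).coeff h = (0 : R2 G).coeff h := by
      rw [hsum]
    rw [MonoidAlgebra.coeff_add, MonoidAlgebra.coeff_add, MonoidAlgebra.coeff_add,
      Finsupp.add_apply, Finsupp.add_apply, Finsupp.add_apply, MonoidAlgebra.coeff_zero,
      Finsupp.zero_apply] at happ
    rw [eval_ne h₁ (hq ▸ d01), eval_ne h₂ (hq ▸ d02), eval_ne h₃ (hq ▸ d03),
      add_zero, add_zero, add_zero] at happ
    exact happ
  · exact eval_ne h₀ hq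

lemma extract {u₀ u₁ u₂ u₃ : R2 G}
    (h₀ : ↑u₀.coeff.support ⊆ (Subgroup.center G : Set G))
    (h₁ : ↑u₁.coeff.support ⊆ (Subgroup.center G : Set G))
    (h₂ : ↑u₂.coeff.support ⊆ (Subgroup.center G : Set G))
    (h₃ : ↑u₃.coeff.support ⊆ (Subgroup.center G : Set G))
    {g₀ g₁ g₂ g₃ : G}
    (d01 : ((g₀ : G ⧸ Subgroup.center G)) ≠ g₁)
    (d02 : ((g₀ : G ⧸ Subgroup.center G)) ≠ g₂)
    (d03 : ((g₀ : G ⧸ Subgroup.center G)) ≠ g₃)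
    (d12 : ((g₁ : G ⧸ Subgroup.center G)) ≠ g₂)
    (d13 : ((g₁ : G ⧸ Subgroup.center G)) ≠ g₃)
    (d23 : ((g₂ : G ⧸ Subgroup.center G)) ≠ g₃)
    (hsum : u₀ * emb g₀ + u₁ * emb g₁ + u₂ * emb g₂ + u₃ * emb g₃ = 0) :
    u₀ = 0 ∧ u₁ = 0 ∧ u₂ = 0 ∧ u₃ = 0 := by
  refine ⟨extract1 h₀ h₁ h₂ h₃ d01 d02 d03 hsum,
    extract1 h₁ h₀ h₂ h₃ d01.symm d12 d13 ?_,
    extract1 h₂ h₀ h₁ h₃ d02.symm d12.symm d23 ?_,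
    extract1 h₃ h₀ h₁ h₂ d03.symm d13.symm d23.symm ?_⟩ <;>
  · rw [← hsum]; abel

/-- support-closure lemmas -/
lemma csupp_add {x y : R2 G} (hx : ↑x.coeff.support ⊆ (Subgroup.center G : Set G))
    (hy : ↑y.coeff.support ⊆ (Subgroup.center G : Set G)) :
    ↑(x + y).coeff.support ⊆ (Subgroup.center G : Set G) := by
  classical
  intro g hg
  rcases Finset.mem_union.mp (Finsupp.support_add (Finset.mem_coe.mp hg)) with h | h
  · exact hx h
  · exact hy h

lemma csupp_mul {x y : R2 G} (hx : ↑x.coeff.support ⊆ (Subgroup.center G : Set G))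
    (hy : ↑y.coeff.support ⊆ (Subgroup.center G : Set G)) :
    ↑(x * y).coeff.support ⊆ (Subgroup.center G : Set G) := by
  classical
  intro g hg
  obtain ⟨p, hp, q, hq, hpq⟩ := Finset.mem_mul.mp (MonoidAlgebra.support_coeff_mul_subset x y (Finset.mem_coe.mp hg))
  exact hpq ▸ mul_mem (hx hp) (hy hq)

lemma csupp_emb {g : G} (hg : g ∈ Subgroup.center G) :
    ↑(emb g : R2 G).coeff.support ⊆ (Subgroup.center G : Set G) := by
  intro h hh
  have := Finsupp.support_single_subset (Finset.mem_coe.mp hh)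
  rw [Finset.mem_singleton] at this
  exact this ▸ hg

lemma csupp_one : ↑(1 : R2 G).coeff.support ⊆ (Subgroup.center G : Set G) :=
  csupp_emb (one_mem _)

lemma char2 (y : R2 G) : y + y = 0 := by
  calc y + y = (1 : ZMod 2) • y + (1 : ZMod 2) • y := by rw [one_smul]
  _ = ((1 + 1 : ZMod 2)) • y := (add_smul _ _ _).symm
  _ = (0 : ZMod 2) • y := by rw [show (1 + 1 : ZMod 2) = 0 from rfl]
  _ = 0 := zero_smul _ _

end Aux

/-- For `x = x₀ + x₁a + x₂b + x₃ab` with `x₀, x₁, x₂, x₃ ∈ ℤ₂C`, one has `xx⊙ = 1` if and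
only if `x₀² + x₁²a²e + x₂²b²e + x₃²a²b² = 1`, `(x₀x₁ + x₂x₃b²)(1 + e) = 0`,
`(x₀x₂ + x₁x₃a²)(1 + e) = 0` and `(x₀x₃ + x₁x₂)(1 + e) = 0`. -/
theorem stmt_15
 {G : Type*} [Group G] [Fintype G] (hG : IsPGroup 2 G)
    (e : G) (hcomm : commutator G = Subgroup.zpowers e) (he : orderOf e = 2)
    (a b : G)
    (ha : orderOf ((a : G ⧸ Subgroup.center G)) = 2)
    (hb : orderOf ((b : G ⧸ Subgroup.center G)) = 2)
    (hab : ((a : G ⧸ Subgroup.center G)) * b = (b : G ⧸ Subgroup.center G) * a)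
    (hinf : Subgroup.zpowers ((a : G ⧸ Subgroup.center G)) ⊓
      Subgroup.zpowers ((b : G ⧸ Subgroup.center G)) = ⊥)
    (hsup : Subgroup.zpowers ((a : G ⧸ Subgroup.center G)) ⊔
      Subgroup.zpowers ((b : G ⧸ Subgroup.center G)) = ⊤)
    :
    ∀ x₀ x₁ x₂ x₃ : R2 G,
      ↑x₀.coeff.support ⊆ (Subgroup.center G : Set G) →
      ↑x₁.coeff.support ⊆ (Subgroup.center G : Set G) →
      ↑x₂.coeff.support ⊆ (Subgroup.center G : Set G) →
      ↑x₃.coeff.support ⊆ (Subgroup.center G : Set G) →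
      ((x₀ + x₁ * emb a + x₂ * emb b + x₃ * (emb a * emb b)) *
          odot e (x₀ + x₁ * emb a + x₂ * emb b + x₃ * (emb a * emb b)) = 1 ↔
        (x₀ * x₀ + x₁ * x₁ * (emb a * emb a) * emb e + x₂ * x₂ * (emb b * emb b) * emb e +
            x₃ * x₃ * (emb a * emb a) * (emb b * emb b) = 1 ∧
          (x₀ * x₁ + x₂ * x₃ * (emb b * emb b)) * (1 + emb e) = 0 ∧
          (x₀ * x₂ + x₁ * x₃ * (emb a * emb a)) * (1 + emb e) = 0 ∧
          (x₀ * x₃ + x₁ * x₂) * (1 + emb e) = 0)) := by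
  intro x₀ x₁ x₂ x₃ hx0 hx1 hx2 hx3
  -- group-theoretic facts
  have habe : a * b = b * a * e := ab_rel e hcomm he a b hab hsup
  have heC : e ∈ Subgroup.center G := comm_le_center a b hab hsup
    (hcomm ▸ Subgroup.mem_zpowers e)
  have he2 : e * e = 1 := by
    have := pow_orderOf_eq_one e
    rwa [he, pow_two] at this
  have hba : b * a = a * b * e := by rw [habe, mul_assoc, he2, mul_one]
  have hbae : b * a = a * (b * e) := by rw [hba, mul_assoc]
  have hea : e * a = a * e := (Subgroup.mem_center_iff.mp heC a).symm
  have heb : e * b = b * e := (Subgroup.mem_center_iff.mp heC b).symm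
  -- quotient distinctness
  have hA1 : ((a : G ⧸ Subgroup.center G)) ≠ 1 := by
    intro h
    rw [h, orderOf_one] at ha
    exact absurd ha (by norm_num)
  have hB1 : ((b : G ⧸ Subgroup.center G)) ≠ 1 := by
    intro h
    rw [h, orderOf_one] at hb
    exact absurd hb (by norm_num)
  have hABne : ((a : G ⧸ Subgroup.center G)) ≠ (b : G ⧸ Subgroup.center G) := by
    intro h
    apply hA1
    have hm : (a : G ⧸ Subgroup.center G) ∈ Subgroup.zpowers ((a : G ⧸ Subgroup.center G)) ⊓
        Subgroup.zpowers ((b : G ⧸ Subgroup.center G)) :=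
      ⟨Subgroup.mem_zpowers _, Subgroup.mem_zpowers_iff.mpr ⟨1, by rw [zpow_one, h]⟩⟩
    rw [hinf] at hm
    exact Subgroup.mem_bot.mp hm
  have hAB1 : (((a * b : G)) : G ⧸ Subgroup.center G) ≠ 1 := by
    intro h
    rw [QuotientGroup.mk_mul] at h
    have h' : (a : G ⧸ Subgroup.center G) = ((b : G ⧸ Subgroup.center G))⁻¹ :=
      eq_inv_of_mul_eq_one_left h
    apply hA1
    have hm : (a : G ⧸ Subgroup.center G) ∈ Subgroup.zpowers ((a : G ⧸ Subgroup.center G)) ⊓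
        Subgroup.zpowers ((b : G ⧸ Subgroup.center G)) :=
      ⟨Subgroup.mem_zpowers _, h' ▸ Subgroup.inv_mem _ (Subgroup.mem_zpowers _)⟩
    rw [hinf] at hm
    exact Subgroup.mem_bot.mp hm
  have hABa : (((a * b : G)) : G ⧸ Subgroup.center G) ≠ (a : G ⧸ Subgroup.center G) := by
    intro h
    rw [QuotientGroup.mk_mul] at h
    exact hB1 (mul_left_cancel (h.trans (mul_one _).symm))
  have hABb : (((a * b : G)) : G ⧸ Subgroup.center G) ≠ (b : G ⧸ Subgroup.center G) := by
    intro h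
    rw [QuotientGroup.mk_mul] at h
    exact hA1 (mul_right_cancel (h.trans (one_mul _).symm))
  -- non-centrality
  have haC : a ∉ Subgroup.center G := fun h => hA1 ((QuotientGroup.eq_one_iff a).mpr h)
  have hbC : b ∉ Subgroup.center G := fun h => hB1 ((QuotientGroup.eq_one_iff b).mpr h)
  have habC : a * b ∉ Subgroup.center G := fun h => hAB1 ((QuotientGroup.eq_one_iff _).mpr h)
  -- squares are central
  have ha2 : a * a ∈ Subgroup.center G := by
    rw [← QuotientGroup.eq_one_iff, QuotientGroup.mk_mul]
    have := pow_orderOf_eq_one ((a : G ⧸ Subgroup.center G))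
    rwa [ha, pow_two] at this
  have hb2 : b * b ∈ Subgroup.center G := by
    rw [← QuotientGroup.eq_one_iff, QuotientGroup.mk_mul]
    have := pow_orderOf_eq_one ((b : G ⧸ Subgroup.center G))
    rwa [hb, pow_two] at this
  -- algebra commutation facts
  have e0 : ∀ g : G, emb g * x₀ = x₀ * emb g := fun g => (central_comm hx0 _).symm
  have e1 : ∀ g : G, emb g * x₁ = x₁ * emb g := fun g => (central_comm hx1 _).symm
  have e2 : ∀ g : G, emb g * x₂ = x₂ * emb g := fun g => (central_comm hx2 _).symm
  have e3 : ∀ g : G, emb g * x₃ = x₃ * emb g := fun g => (central_comm hx3 _).symm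
  have e0' : ∀ (g : G) (y : R2 G), emb g * (x₀ * y) = x₀ * (emb g * y) := fun g y => by
    rw [← mul_assoc, e0, mul_assoc]
  have e1' : ∀ (g : G) (y : R2 G), emb g * (x₁ * y) = x₁ * (emb g * y) := fun g y => by
    rw [← mul_assoc, e1, mul_assoc]
  have e2' : ∀ (g : G) (y : R2 G), emb g * (x₂ * y) = x₂ * (emb g * y) := fun g y => by
    rw [← mul_assoc, e2, mul_assoc]
  have e3' : ∀ (g : G) (y : R2 G), emb g * (x₃ * y) = x₃ * (emb g * y) := fun g y => by
    rw [← mul_assoc, e3, mul_assoc]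
  have s10 : x₁ * x₀ = x₀ * x₁ := central_comm hx1 x₀
  have s20 : x₂ * x₀ = x₀ * x₂ := central_comm hx2 x₀
  have s21 : x₂ * x₁ = x₁ * x₂ := central_comm hx2 x₁
  have s30 : x₃ * x₀ = x₀ * x₃ := central_comm hx3 x₀
  have s31 : x₃ * x₁ = x₁ * x₃ := central_comm hx3 x₁
  have s32 : x₃ * x₂ = x₂ * x₃ := central_comm hx3 x₂
  have s10' : ∀ y : R2 G, x₁ * (x₀ * y) = x₀ * (x₁ * y) := fun y => by
    rw [← mul_assoc, s10, mul_assoc]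
  have s20' : ∀ y : R2 G, x₂ * (x₀ * y) = x₀ * (x₂ * y) := fun y => by
    rw [← mul_assoc, s20, mul_assoc]
  have s21' : ∀ y : R2 G, x₂ * (x₁ * y) = x₁ * (x₂ * y) := fun y => by
    rw [← mul_assoc, s21, mul_assoc]
  have s30' : ∀ y : R2 G, x₃ * (x₀ * y) = x₀ * (x₃ * y) := fun y => by
    rw [← mul_assoc, s30, mul_assoc]
  have s31' : ∀ y : R2 G, x₃ * (x₁ * y) = x₁ * (x₃ * y) := fun y => by
    rw [← mul_assoc, s31, mul_assoc]
  have s32' : ∀ y : R2 G, x₃ * (x₂ * y) = x₂ * (x₃ * y) := fun y => by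
    rw [← mul_assoc, s32, mul_assoc]
  have eba : (emb b : R2 G) * emb a = emb a * (emb b * emb e) := by
    rw [emb_mul, emb_mul, emb_mul, hbae]
  have eba' : ∀ y : R2 G, emb b * (emb a * y) = emb a * (emb b * (emb e * y)) := fun y => by
    rw [← mul_assoc, eba, mul_assoc, mul_assoc]
  have eea : (emb e : R2 G) * emb a = emb a * emb e := by rw [emb_mul, emb_mul, hea]
  have eea' : ∀ y : R2 G, emb e * (emb a * y) = emb a * (emb e * y) := fun y => by
    rw [← mul_assoc, eea, mul_assoc]
  have eeb : (emb e : R2 G) * emb b = emb b * emb e := by rw [emb_mul, emb_mul, heb]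
  have eeb' : ∀ y : R2 G, emb e * (emb b * y) = emb b * (emb e * y) := fun y => by
    rw [← mul_assoc, eeb, mul_assoc]
  have eee : (emb e : R2 G) * emb e = 1 := by rw [emb_mul, he2, emb_one]
  have eee' : ∀ y : R2 G, emb e * (emb e * y) = y := fun y => by
    rw [← mul_assoc, eee, one_mul]
  -- odot computation
  have hodot : odot e (x₀ + x₁ * emb a + x₂ * emb b + x₃ * (emb a * emb b)) =
      x₀ + x₁ * emb a * emb e + x₂ * emb b * emb e + x₃ * (emb a * emb b) * emb e := by
    rw [emb_mul a b, odot_add, odot_add, odot_add, odot_central hx0,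
      odot_mul_emb hx1 haC, odot_mul_emb hx2 hbC, odot_mul_emb hx3 habC]
  -- main expansion
  have hexp : (x₀ + x₁ * emb a + x₂ * emb b + x₃ * (emb a * emb b)) *
      (x₀ + x₁ * emb a * emb e + x₂ * emb b * emb e + x₃ * (emb a * emb b) * emb e) =
      (x₀ * x₀ + x₁ * x₁ * (emb a * emb a) * emb e + x₂ * x₂ * (emb b * emb b) * emb e +
            x₃ * x₃ * (emb a * emb a) * (emb b * emb b))
        + ((x₀ * x₁ + x₂ * x₃ * (emb b * emb b)) * (1 + emb e)) * emb a
        + ((x₀ * x₂ + x₁ * x₃ * (emb a * emb a)) * (1 + emb e)) * emb b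
        + ((x₀ * x₃ + x₁ * x₂) * (1 + emb e)) * emb (a * b) := by
    rw [show (emb (a * b) : R2 G) = emb a * emb b from (emb_mul a b).symm]
    simp only [mul_add, add_mul, mul_one, one_mul, mul_assoc, e0', e1', e2', e3',
      e0, e1, e2, e3, s10, s10', s20, s20', s21, s21', s30, s30', s31, s31', s32, s32',
      eba, eba', eea, eea', eeb, eeb', eee, eee']
    abel
  -- support facts
  have hSA2 : ↑((emb a : R2 G) * emb a).coeff.support ⊆ (Subgroup.center G : Set G) := by
    rw [emb_mul]; exact csupp_emb ha2
  have hSB2 : ↑((emb b : R2 G) * emb b).coeff.support ⊆ (Subgroup.center G : Set G) := by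
    rw [emb_mul]; exact csupp_emb hb2
  have hSE : ↑(emb e : R2 G).coeff.support ⊆ (Subgroup.center G : Set G) := csupp_emb heC
  have hc0 : ↑((x₀ * x₀ + x₁ * x₁ * (emb a * emb a) * emb e + x₂ * x₂ * (emb b * emb b) * emb e +
      x₃ * x₃ * (emb a * emb a) * (emb b * emb b) + 1 : R2 G)).coeff.support ⊆
      (Subgroup.center G : Set G) :=
    csupp_add (csupp_add (csupp_add (csupp_add (csupp_mul hx0 hx0)
      (csupp_mul (csupp_mul (csupp_mul hx1 hx1) hSA2) hSE))
      (csupp_mul (csupp_mul (csupp_mul hx2 hx2) hSB2) hSE))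
      (csupp_mul (csupp_mul (csupp_mul hx3 hx3) hSA2) hSB2)) csupp_one
  have hcE1 : ↑((1 + emb e : R2 G)).coeff.support ⊆ (Subgroup.center G : Set G) :=
    csupp_add csupp_one hSE
  have hc1 : ↑(((x₀ * x₁ + x₂ * x₃ * (emb b * emb b)) * (1 + emb e) : R2 G)).coeff.support ⊆
      (Subgroup.center G : Set G) :=
    csupp_mul (csupp_add (csupp_mul hx0 hx1) (csupp_mul (csupp_mul hx2 hx3) hSB2)) hcE1
  have hc2 : ↑(((x₀ * x₂ + x₁ * x₃ * (emb a * emb a)) * (1 + emb e) : R2 G)).coeff.support ⊆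
      (Subgroup.center G : Set G) :=
    csupp_mul (csupp_add (csupp_mul hx0 hx2) (csupp_mul (csupp_mul hx1 hx3) hSA2)) hcE1
  have hc3 : ↑(((x₀ * x₃ + x₁ * x₂) * (1 + emb e) : R2 G)).coeff.support ⊆
      (Subgroup.center G : Set G) :=
    csupp_mul (csupp_add (csupp_mul hx0 hx3) (csupp_mul hx1 hx2)) hcE1
  -- distinctness for extraction with (1, a, b, ab)
  have d01 : (((1 : G)) : G ⧸ Subgroup.center G) ≠ (a : G ⧸ Subgroup.center G) := by
    rw [QuotientGroup.mk_one]; exact hA1.symm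
  have d02 : (((1 : G)) : G ⧸ Subgroup.center G) ≠ (b : G ⧸ Subgroup.center G) := by
    rw [QuotientGroup.mk_one]; exact hB1.symm
  have d03 : (((1 : G)) : G ⧸ Subgroup.center G) ≠ ((a * b : G) : G ⧸ Subgroup.center G) := by
    rw [QuotientGroup.mk_one]; exact hAB1.symm
  constructor
  · intro h
    rw [hodot, hexp] at h
    have hsum : (x₀ * x₀ + x₁ * x₁ * (emb a * emb a) * emb e + x₂ * x₂ * (emb b * emb b) * emb e +
            x₃ * x₃ * (emb a * emb a) * (emb b * emb b) + 1) * emb (1 : G)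
        + ((x₀ * x₁ + x₂ * x₃ * (emb b * emb b)) * (1 + emb e)) * emb a
        + ((x₀ * x₂ + x₁ * x₃ * (emb a * emb a)) * (1 + emb e)) * emb b
        + ((x₀ * x₃ + x₁ * x₂) * (1 + emb e)) * emb (a * b) = 0 := by
      rw [emb_one, mul_one]
      calc (x₀ * x₀ + x₁ * x₁ * (emb a * emb a) * emb e + x₂ * x₂ * (emb b * emb b) * emb e +
            x₃ * x₃ * (emb a * emb a) * (emb b * emb b) + 1)
        + ((x₀ * x₁ + x₂ * x₃ * (emb b * emb b)) * (1 + emb e)) * emb a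
        + ((x₀ * x₂ + x₁ * x₃ * (emb a * emb a)) * (1 + emb e)) * emb b
        + ((x₀ * x₃ + x₁ * x₂) * (1 + emb e)) * emb (a * b)
          = ((x₀ * x₀ + x₁ * x₁ * (emb a * emb a) * emb e + x₂ * x₂ * (emb b * emb b) * emb e +
            x₃ * x₃ * (emb a * emb a) * (emb b * emb b))
        + ((x₀ * x₁ + x₂ * x₃ * (emb b * emb b)) * (1 + emb e)) * emb a
        + ((x₀ * x₂ + x₁ * x₃ * (emb a * emb a)) * (1 + emb e)) * emb b
        + ((x₀ * x₃ + x₁ * x₂) * (1 + emb e)) * emb (a * b)) + 1 := by abel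
      _ = 1 + 1 := by rw [h]
      _ = 0 := char2 1
    obtain ⟨E0, E1, E2, E3⟩ := extract hc0 hc1 hc2 hc3 d01 d02 d03 hABne hABa.symm hABb.symm hsum
    refine ⟨?_, E1, E2, E3⟩
    have h2 : (x₀ * x₀ + x₁ * x₁ * (emb a * emb a) * emb e + x₂ * x₂ * (emb b * emb b) * emb e +
        x₃ * x₃ * (emb a * emb a) * (emb b * emb b) + 1) + 1 = 1 := by
      rw [E0, zero_add]
    rwa [add_assoc, char2, add_zero] at h2
  · rintro ⟨h1, h2, h3, h4⟩
    rw [hodot, hexp, h1, h2, h3, h4]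
    simp
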